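/- (OMD⁺ / prescient mirror descent regret bound) Let φ : E → ℝ be differentiable and β-strongly convex on Z with β > 0, let γ > 0, let each loss ℓ_t : E → ℝ be convex, and let z_0 ∈ Z. Suppose that for t = 1, …, T the point z_t ∈ Z minimizes z ↦ α_t ℓ_t(z) + (1/γ) V_{z_{t−1}}(z) over Z. Then for every z* ∈ Z: Σ_{t=1}^T α_t(ℓ_t(z_t) − ℓ_t(z*)) ≤ V_{z_0}(z*)/γ − Σ_{t=1}^T (β/(2γ)) ‖z_{t−1} − z_t‖². -/

import Mathlib

open scoped BigOperators RealInnerProductSpace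

open Filter Set Topology

/-- Directional slope of a differentiable function tends to the inner product with
the gradient. -/
lemma omd_aux_slope {E : Type*} [NormedAddCommGroup E] [InnerProductSpace ℝ E]
    {φ : E → ℝ} {g : E} {c : E} (h : HasFDerivAt φ (innerSL ℝ g) c) (d : E) :
    Tendsto (fun θ : ℝ => (φ (c + θ • d) - φ c) / θ) (𝓝[>] 0) (𝓝 (⟪g, d⟫)) := by
  have hline : HasDerivAt (fun θ : ℝ => c + θ • d) d 0 := by
    simpa using ((hasDerivAt_id (0 : ℝ)).smul_const d).const_add c
  have h0 : HasFDerivAt φ (innerSL ℝ g) (c + (0:ℝ) • d) := by simpa using h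
  have hcomp : HasDerivAt (fun θ : ℝ => φ (c + θ • d)) (⟪g, d⟫) 0 := by
    simpa [Function.comp_def] using h0.comp_hasDerivAt 0 hline
  have h1 := hasDerivAt_iff_tendsto_slope.mp hcomp
  have h2 := h1.mono_left (nhdsWithin_mono (0 : ℝ) (fun x hx => ne_of_gt hx))
  refine h2.congr fun θ => ?_
  simp [slope_def_field]

/-- Bregman divergence of a `β`-strongly convex differentiable function is at least
`β/2 ‖x - c‖²`. -/
lemma omd_aux_bregman {E : Type*} [NormedAddCommGroup E] [InnerProductSpace ℝ E]
    {Z : Set E} {φ : E → ℝ} {gφ : E → E} {β : ℝ}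
    (hφdiff : ∀ x : E, HasFDerivAt φ (innerSL ℝ (gφ x)) x)
    (hφsc : StrongConvexOn Z β φ) {c x : E} (hc : c ∈ Z) (hx : x ∈ Z) :
    β / 2 * ‖x - c‖ ^ 2 ≤ φ x - ⟪gφ c, x - c⟫ - φ c := by
  have hslope := omd_aux_slope (hφdiff c) (x - c)
  have hpoly : Tendsto (fun θ : ℝ => φ x - φ c - β / 2 * (1 - θ) * ‖x - c‖ ^ 2)
      (𝓝[>] 0) (𝓝 (φ x - φ c - β / 2 * (1 - 0) * ‖x - c‖ ^ 2)) := by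
    apply Tendsto.mono_left _ nhdsWithin_le_nhds
    exact Continuous.tendsto (by continuity) 0
  have hev : ∀ᶠ θ : ℝ in 𝓝[>] 0,
      (φ (c + θ • (x - c)) - φ c) / θ ≤ φ x - φ c - β / 2 * (1 - θ) * ‖x - c‖ ^ 2 := by
    filter_upwards [Ioo_mem_nhdsGT_of_mem (by simp : (0:ℝ) ∈ Ico (0:ℝ) 1)] with θ hθ
    obtain ⟨hθ0, hθ1⟩ := hθ
    have hsc := hφsc.2 hx hc hθ0.le (by linarith : (0:ℝ) ≤ 1 - θ) (by ring)
    have hpt : θ • x + (1 - θ) • c = c + θ • (x - c) := by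
      rw [smul_sub, sub_smul, one_smul]; abel
    rw [hpt] at hsc
    rw [div_le_iff₀ hθ0]
    simp only [smul_eq_mul] at hsc
    nlinarith [hsc]
  have hle := le_of_tendsto_of_tendsto hslope hpoly hev
  simp only [sub_zero, mul_one] at hle
  linarith

theorem omd_plus_regret_bound
    {E : Type*} [NormedAddCommGroup E] [InnerProductSpace ℝ E]
    (Z : Set E) (hZne : Z.Nonempty) (hZcl : IsClosed Z) (hZconv : Convex ℝ Z)
    (T : ℕ) (hT : 1 ≤ T)
    (α : ℕ → ℝ) (hα : ∀ t ∈ Finset.Icc 1 T, 0 < α t)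
    (φ : E → ℝ) (gφ : E → E)
    -- `φ` is differentiable with gradient `gφ`
    (hφdiff : ∀ x : E, HasFDerivAt φ (innerSL ℝ (gφ x)) x)
    (β : ℝ) (hβ : 0 < β) (hφsc : StrongConvexOn Z β φ)
    (γ : ℝ) (hγ : 0 < γ)
    (ℓ : ℕ → E → ℝ) (hℓ : ∀ t ∈ Finset.Icc 1 T, ConvexOn ℝ Set.univ (ℓ t))
    (z : ℕ → E) (hz0 : z 0 ∈ Z)
    -- for `t = 1, …, T`, `z t` minimizes `α_t ℓ_t + (1/γ) V_{z (t-1)}` over `Z`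
    (hz : ∀ t ∈ Finset.Icc 1 T, z t ∈ Z ∧ ∀ u ∈ Z,
      α t * ℓ t (z t) + (1/γ) * (φ (z t) - ⟪gφ (z (t-1)), z t - z (t-1)⟫ - φ (z (t-1)))
        ≤ α t * ℓ t u + (1/γ) * (φ u - ⟪gφ (z (t-1)), u - z (t-1)⟫ - φ (z (t-1))))
    (zstar : E) (hzstar : zstar ∈ Z) :
    ∑ t ∈ Finset.Icc 1 T, α t * (ℓ t (z t) - ℓ t zstar)
      ≤ (φ zstar - ⟪gφ (z 0), zstar - z 0⟫ - φ (z 0)) / γ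
        - ∑ t ∈ Finset.Icc 1 T, (β/(2*γ)) * ‖z (t-1) - z t‖^2 := by
  -- the Bregman divergence w.r.t. the comparator
  set V : ℕ → ℝ := fun n => φ zstar - ⟪gφ (z n), zstar - z n⟫ - φ (z n) with hVdef
  -- all iterates are in Z
  have hmem : ∀ n, n ≤ T → z n ∈ Z := by
    intro n hn
    cases n with
    | zero => exact hz0
    | succ k => exact (hz (k+1) (Finset.mem_Icc.mpr ⟨Nat.succ_le_succ (Nat.zero_le k), hn⟩)).1
  -- per-step inequality
  have step : ∀ t ∈ Finset.Icc 1 T, α t * (ℓ t (z t) - ℓ t zstar)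
      ≤ (1/γ) * (V (t-1) - V t) - (β/(2*γ)) * ‖z (t-1) - z t‖^2 := by
    intro t ht
    obtain ⟨ht1, htT⟩ := Finset.mem_Icc.mp ht
    have hαt := hα t ht
    have hcZ : z (t-1) ∈ Z := hmem _ (le_trans (Nat.sub_le t 1) htT)
    have hwZ : z t ∈ Z := hmem _ htT
    set c := z (t-1) with hc
    set w := z t with hw
    set d := zstar - w with hd
    -- limit inequality: α t (ℓ w - ℓ z*) ≤ (1/γ)(⟪g w, d⟫ - ⟪g c, d⟫)
    have hslope := omd_aux_slope (hφdiff w) d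
    have htt : Tendsto (fun θ : ℝ => (1/γ) * ((φ (w + θ • d) - φ w) / θ - ⟪gφ c, d⟫))
        (𝓝[>] 0) (𝓝 ((1/γ) * (⟪gφ w, d⟫ - ⟪gφ c, d⟫))) :=
      (hslope.sub tendsto_const_nhds).const_mul _
    have hev : ∀ᶠ θ : ℝ in 𝓝[>] 0, α t * (ℓ t w - ℓ t zstar)
        ≤ (1/γ) * ((φ (w + θ • d) - φ w) / θ - ⟪gφ c, d⟫) := by
      filter_upwards [Ioo_mem_nhdsGT_of_mem (by simp : (0:ℝ) ∈ Ico (0:ℝ) 1)] with θ hθ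
      obtain ⟨hθ0, hθ1⟩ := hθ
      have huZ : θ • zstar + (1 - θ) • w ∈ Z :=
        hZconv hzstar hwZ hθ0.le (by linarith) (by ring)
      have hueq : θ • zstar + (1 - θ) • w = w + θ • d := by
        rw [hd, smul_sub, sub_smul, one_smul]; abel
      have hmin := (hz t ht).2 _ huZ
      have hconv := (hℓ t ht).2 (Set.mem_univ zstar) (Set.mem_univ w)
        hθ0.le (by linarith : (0:ℝ) ≤ 1 - θ) (by ring)
      simp only [smul_eq_mul] at hconv
      rw [hueq] at hmin hconv
      rw [← hc, ← hw] at hmin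
      have hinner : ⟪gφ c, w + θ • d - c⟫ = ⟪gφ c, w - c⟫ + θ * ⟪gφ c, d⟫ := by
        rw [show w + θ • d - c = (w - c) + θ • d by abel]
        rw [inner_add_right, real_inner_smul_right]
      rw [hinner] at hmin
      have hγ' : (0:ℝ) < 1/γ := by positivity
      have key : θ * (α t * (ℓ t w - ℓ t zstar))
          ≤ (1/γ) * (φ (w + θ • d) - φ w - θ * ⟪gφ c, d⟫) := by
        nlinarith [mul_le_mul_of_nonneg_left hconv hαt.le, hmin]
      rw [← mul_le_mul_iff_right₀ hθ0]
      calc θ * (α t * (ℓ t w - ℓ t zstar))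
          ≤ (1/γ) * (φ (w + θ • d) - φ w - θ * ⟪gφ c, d⟫) := key
        _ = θ * ((1/γ) * ((φ (w + θ • d) - φ w) / θ - ⟪gφ c, d⟫)) := by
            field_simp
    have hlim : α t * (ℓ t w - ℓ t zstar)
        ≤ (1/γ) * (⟪gφ w, d⟫ - ⟪gφ c, d⟫) := ge_of_tendsto htt hev
    -- three-point identity
    have hid : ⟪gφ w, d⟫ - ⟪gφ c, d⟫
        = (V (t-1) - V t) - (φ w - ⟪gφ c, w - c⟫ - φ c) := by
      simp only [hVdef, hd, ← hc, ← hw, inner_sub_right]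
      ring
    rw [hid] at hlim
    have hbr := omd_aux_bregman hφdiff hφsc hcZ hwZ
    have hbr' : (1/γ) * (β/2 * ‖w - c‖^2) ≤ (1/γ) * (φ w - ⟪gφ c, w - c⟫ - φ c) :=
      mul_le_mul_of_nonneg_left hbr (by positivity)
    have hnorm : ‖c - w‖ = ‖w - c‖ := norm_sub_rev _ _
    have hcoef : (β/(2*γ)) * ‖w - c‖^2 = (1/γ) * (β/2 * ‖w - c‖^2) := by
      ring
    have hexp : (1/γ) * ((V (t-1) - V t) - (φ w - ⟪gφ c, w - c⟫ - φ c))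
        = (1/γ) * (V (t-1) - V t) - (1/γ) * (φ w - ⟪gφ c, w - c⟫ - φ c) := by ring
    rw [hexp] at hlim
    rw [hnorm, hcoef]
    linarith
  -- sum up and telescope
  have htel : ∑ t ∈ Finset.Icc 1 T, (V (t-1) - V t) = V 0 - V T := by
    rw [← Finset.Ico_add_one_right_eq_Icc, Finset.sum_Ico_eq_sum_range]
    have hTT : T + 1 - 1 = T := rfl
    rw [hTT]
    have : ∀ i ∈ Finset.range T, V (1 + i - 1) - V (1 + i) = V i - V (i+1) := by
      intro i _
      congr 2 <;> omega
    rw [Finset.sum_congr rfl this, Finset.sum_range_sub' V]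
  have hVT : 0 ≤ V T := by
    have hbr := omd_aux_bregman hφdiff hφsc (hmem T le_rfl) hzstar
    have : (0:ℝ) ≤ β/2 * ‖zstar - z T‖^2 := by positivity
    simp only [hVdef]
    linarith
  calc ∑ t ∈ Finset.Icc 1 T, α t * (ℓ t (z t) - ℓ t zstar)
      ≤ ∑ t ∈ Finset.Icc 1 T,
          ((1/γ) * (V (t-1) - V t) - (β/(2*γ)) * ‖z (t-1) - z t‖^2) :=
        Finset.sum_le_sum step
    _ = (1/γ) * (∑ t ∈ Finset.Icc 1 T, (V (t-1) - V t))
          - ∑ t ∈ Finset.Icc 1 T, (β/(2*γ)) * ‖z (t-1) - z t‖^2 := by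
        rw [Finset.sum_sub_distrib, Finset.mul_sum]
    _ = (1/γ) * (V 0 - V T)
          - ∑ t ∈ Finset.Icc 1 T, (β/(2*γ)) * ‖z (t-1) - z t‖^2 := by rw [htel]
    _ ≤ V 0 / γ - ∑ t ∈ Finset.Icc 1 T, (β/(2*γ)) * ‖z (t-1) - z t‖^2 := by
        have h1 : (1/γ) * (V 0 - V T) ≤ (1/γ) * V 0 :=
          mul_le_mul_of_nonneg_left (by linarith) (by positivity)
        have h2 : (1/γ) * V 0 = V 0 / γ := by ring
        linarith
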